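/- Let κ = Σ_w r^w τ_w ∈ L²_q W be one of the vectors κ(1,1), κ(−1/q_s, −1/q_t), κ(1, −1/q_t), κ(−1/q_s, 1) (whenever it lies in L²_q W). Then κ·τ_w = q^w r^w · κ for every w ∈ W, and consequently κ² = ‖κ‖²_q · κ, so κ/‖κ‖²_q is idempotent. -/

import Mathlib

/-! Setup: `DihedralGroup 0` is the infinite dihedral group W with generators
s = sr 0 and t = sr 1; `dihLen` is the Coxeter word length; `dihProd a b w` is
the product of a's and b's along the (unique) reduced expression of w, so
`dihProd qs qt = q^w` and `dihProd rs rt = r^w`; `dihWord w` is the reduced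
expression of w as a list of letters (`true` = s, `false` = t).  H plays the
role of L²_q W with Hecke basis vectors τ_w; Rs and Rt are the bounded
operators of right multiplication by τ_s, τ_t, and `Rop Rs Rt w` is right
multiplication by τ_w (the composite of Rs, Rt along the reduced word of w).
A product ξη, for ξ = Σ_w c_w τ_w ∈ L²_q W, means Σ_w c_w · (η·τ_w). -/

def zmodToInt (n : ZMod 0) : ℤ := n

def dihLen : DihedralGroup 0 → ℕ
  | .r n => 2 * (zmodToInt n).natAbs
  | .sr k => if zmodToInt k ≤ 0 then 2 * (zmodToInt k).natAbs + 1
             else 2 * (zmodToInt k).natAbs - 1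

def dihProd (a b : ℝ) : DihedralGroup 0 → ℝ
  | .r n => (a * b) ^ (zmodToInt n).natAbs
  | .sr k => if zmodToInt k ≤ 0 then a ^ ((zmodToInt k).natAbs + 1) * b ^ (zmodToInt k).natAbs
             else a ^ ((zmodToInt k).natAbs - 1) * b ^ (zmodToInt k).natAbs

def altWord : Bool → ℕ → List Bool
  | _, 0 => []
  | b, n + 1 => b :: altWord (!b) n

def dihWord : DihedralGroup 0 → List Bool
  | .r n => if 0 ≤ zmodToInt n then altWord true (2 * (zmodToInt n).natAbs)
            else altWord false (2 * (zmodToInt n).natAbs)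
  | .sr k => if zmodToInt k ≤ 0 then altWord true (2 * (zmodToInt k).natAbs + 1)
             else altWord false (2 * (zmodToInt k).natAbs - 1)

/-- Right multiplication by τ_w: the composition of the right multiplications
by the generators along the reduced expression w = s₁⋯sₙ. -/
def Rop {H : Type*} [NormedAddCommGroup H] [Module ℝ H]
    (Rs Rt : H →L[ℝ] H) (w : DihedralGroup 0) : H →L[ℝ] H :=
  (dihWord w).foldl (fun acc b => (if b then Rs else Rt).comp acc) 1




lemma zsub (a b : ZMod 0) : zmodToInt (a - b) = zmodToInt a - zmodToInt b := rfl
lemma zone : zmodToInt 1 = 1 := rfl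
lemma zzero : zmodToInt 0 = 0 := rfl

-- involution
lemma hinv (j : ZMod 0) (w : DihedralGroup 0) : (w * .sr j) * .sr j = w := by
  rw [mul_assoc, DihedralGroup.sr_mul_sr, sub_self]
  show w * 1 = w
  exact mul_one w

lemma hne (j : ZMod 0) (w : DihedralGroup 0) : w * .sr j ≠ w := by
  cases w <;> simp [DihedralGroup.r_mul_sr, DihedralGroup.sr_mul_sr]

-- dichotomy for s
lemma hlt_s (w : DihedralGroup 0) (h : ¬ dihLen (w * .sr 0) > dihLen w) :
    dihLen (w * .sr 0) < dihLen w := by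
  cases w with
  | r n =>
    simp only [DihedralGroup.r_mul_sr] at *
    simp only [dihLen, zsub, zzero] at *
    split_ifs at * <;> simp only [*, if_true, if_false] at h ⊢ <;> omega
  | sr k =>
    simp only [DihedralGroup.sr_mul_sr] at *
    simp only [dihLen, zsub, zzero] at *
    split_ifs at * <;> omega

lemma hlt_t (w : DihedralGroup 0) (h : ¬ dihLen (w * .sr 1) > dihLen w) :
    dihLen (w * .sr 1) < dihLen w := by
  cases w with
  | r n =>
    simp only [DihedralGroup.r_mul_sr] at *
    simp only [dihLen, zsub, zone] at *
    split_ifs at * <;> simp only [*, if_true, if_false] at h ⊢ <;> omega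
  | sr k =>
    simp only [DihedralGroup.sr_mul_sr] at *
    simp only [dihLen, zsub, zone] at *
    split_ifs at * <;> omega

lemma hr_s (rs rt : ℝ) (w : DihedralGroup 0) (h : dihLen (w * .sr 0) > dihLen w) :
    dihProd rs rt (w * .sr 0) = rs * dihProd rs rt w := by
  cases w with
  | r n =>
    simp only [DihedralGroup.r_mul_sr] at *
    simp only [dihLen, dihProd, zsub, zzero] at *
    split_ifs at * <;> rename_i h1 <;> simp only [h1, if_true, if_false] at h ⊢
    · have e : (0 - zmodToInt n).natAbs = (zmodToInt n).natAbs := by omega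
      rw [e, mul_pow]; ring
    · omega
  | sr k =>
    simp only [DihedralGroup.sr_mul_sr] at *
    simp only [dihLen, dihProd, zsub, zzero] at *
    split_ifs at * <;> rename_i h1
    · omega
    · obtain ⟨m, hm⟩ : ∃ m, (zmodToInt k).natAbs = m + 1 := ⟨(zmodToInt k).natAbs - 1, by omega⟩
      have e : (0 - zmodToInt k).natAbs = m + 1 := by omega
      rw [e, hm]
      simp only [Nat.add_sub_cancel]
      rw [mul_pow, pow_succ]; ring

lemma hr_t (rs rt : ℝ) (w : DihedralGroup 0) (h : dihLen (w * .sr 1) > dihLen w) :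
    dihProd rs rt (w * .sr 1) = rt * dihProd rs rt w := by
  cases w with
  | r n =>
    simp only [DihedralGroup.r_mul_sr] at *
    simp only [dihLen, dihProd, zsub, zone] at *
    split_ifs at * <;> rename_i h1 <;> simp only [h1, if_true, if_false] at h ⊢
    · omega
    · have e : (1 - zmodToInt n).natAbs = (zmodToInt n).natAbs + 1 := by omega
      rw [e]
      simp only [Nat.add_sub_cancel]
      rw [mul_pow, pow_succ]; ring
  | sr k =>
    simp only [DihedralGroup.sr_mul_sr] at *
    simp only [dihLen, dihProd, zsub, zone] at *
    split_ifs at * <;> rename_i h1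
    · have e : (1 - zmodToInt k).natAbs = (zmodToInt k).natAbs + 1 := by omega
      rw [e, mul_pow, pow_succ, pow_succ]; ring
    · omega


def evP (a b : ℝ) (l : List Bool) : ℝ := (l.map (fun bit => if bit then a else b)).prod

lemma evP_nil (a b : ℝ) : evP a b [] = 1 := rfl
lemma evP_cons (a b : ℝ) (c : Bool) (l : List Bool) :
    evP a b (c :: l) = (if c then a else b) * evP a b l := by
  simp [evP]

lemma altWord_two (c : Bool) (n : ℕ) : altWord c (n + 2) = c :: (!c) :: altWord c n := by
  simp [altWord]

lemma evP_alt_even (a b : ℝ) : ∀ m, evP a b (altWord true (2 * m)) = (a * b) ^ m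
    ∧ evP a b (altWord false (2 * m)) = (a * b) ^ m := by
  intro m
  induction m with
  | zero => simp [altWord, evP]
  | succ m ih =>
    have h1 : 2 * (m + 1) = 2 * m + 2 := by ring
    rw [h1, altWord_two, altWord_two, evP_cons, evP_cons, evP_cons, evP_cons,
      ih.1, ih.2]
    constructor <;> simp <;> ring

lemma evP_alt_odd (a b : ℝ) : ∀ m, evP a b (altWord true (2 * m + 1)) = a ^ (m + 1) * b ^ m
    ∧ evP a b (altWord false (2 * m + 1)) = a ^ m * b ^ (m + 1) := by
  intro m
  induction m with
  | zero => simp [altWord, evP]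
  | succ m ih =>
    have h1 : 2 * (m + 1) + 1 = (2 * m + 1) + 2 := by ring
    rw [h1, altWord_two, altWord_two, evP_cons, evP_cons, evP_cons, evP_cons,
      ih.1, ih.2]
    constructor <;> simp <;> ring

lemma dihProd_eq_evP (a b : ℝ) (w : DihedralGroup 0) : dihProd a b w = evP a b (dihWord w) := by
  cases w with
  | r n =>
    simp only [dihProd, dihWord]
    split_ifs with h1
    · rw [(evP_alt_even a b _).1]
    · rw [(evP_alt_even a b _).2]
  | sr k =>
    simp only [dihProd, dihWord]
    split_ifs with h1
    · rw [(evP_alt_odd a b _).1]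
    · obtain ⟨m, hm⟩ : ∃ m, (zmodToInt k).natAbs = m + 1 :=
        ⟨(zmodToInt k).natAbs - 1, by omega⟩
      have e : 2 * (zmodToInt k).natAbs - 1 = 2 * m + 1 := by omega
      rw [e, (evP_alt_odd a b _).2, hm]
      simp

lemma dihProd_mul (a b c d : ℝ) (w : DihedralGroup 0) :
    dihProd a b w * dihProd c d w = dihProd (a * c) (b * d) w := by
  cases w with
  | r n => simp only [dihProd]; rw [← mul_pow]; ring_nf
  | sr k => simp only [dihProd]; split_ifs <;> rw [mul_pow, mul_pow] <;> ring

lemma dihProd_pos {a b : ℝ} (ha : 0 < a) (hb : 0 < b) (w : DihedralGroup 0) :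
    0 < dihProd a b w := by
  cases w <;> simp only [dihProd] <;> [skip; split_ifs] <;> positivity

lemma Rop_eigen {H : Type*} [NormedAddCommGroup H] [InnerProductSpace ℝ H]
    (Rs Rt : H →L[ℝ] H) (κ : H) (cs ct : ℝ) (hs : Rs κ = cs • κ) (ht : Rt κ = ct • κ) :
    ∀ l : List Bool,
      (l.foldl (fun acc b => (if b then Rs else Rt).comp acc) (1 : H →L[ℝ] H)) κ = evP cs ct l • κ := by
  intro l
  induction l using List.reverseRecOn with
  | nil => simp [evP]
  | append_singleton l c ih =>
    rw [List.foldl_append, List.foldl_cons, List.foldl_nil, ContinuousLinearMap.comp_apply, ih]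
    rw [map_smul]
    cases c <;> simp [evP, hs, ht, smul_smul] <;> ring_nf

lemma eig {H : Type*} [NormedAddCommGroup H] [InnerProductSpace ℝ H] [CompleteSpace H]
    (qs qt rs rt : ℝ)
    (τ : DihedralGroup 0 → H)
    (hinner : ∀ w w' : DihedralGroup 0,
      inner (𝕜 := ℝ) (τ w) (τ w') = if w = w' then dihProd qs qt w else 0)
    (R : H →L[ℝ] H) (j : ZMod 0) (q r : ℝ)
    (hR : ∀ w : DihedralGroup 0,
      R (τ w) = if dihLen (w * DihedralGroup.sr j) > dihLen w
        then τ (w * DihedralGroup.sr j)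
        else (q - 1) • τ w + q • τ (w * DihedralGroup.sr j))
    (hlt : ∀ w, ¬ dihLen (w * DihedralGroup.sr j) > dihLen w →
      dihLen (w * DihedralGroup.sr j) < dihLen w)
    (hrm : ∀ w, dihLen (w * DihedralGroup.sr j) > dihLen w →
      dihProd rs rt (w * DihedralGroup.sr j) = r * dihProd rs rt w)
    (hquad : q * (r * r) = (q - 1) * r + 1)
    (hsum : Summable fun w => dihProd rs rt w • τ w)
    (κ : H) (hκ : κ = ∑' w, dihProd rs rt w • τ w) :
    R κ = (q * r) • κ := by
  classical
  set c : DihedralGroup 0 → ℝ := dihProd rs rt with hc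
  set p : DihedralGroup 0 → ℝ := dihProd qs qt with hp
  have hsum2 : Summable (fun w => c w • R (τ w)) := by
    have := hsum.map R R.continuous
    simpa [Function.comp_def, map_smul] using this
  have hRκ : R κ = ∑' w, c w • R (τ w) := by
    rw [hκ, R.map_tsum hsum]
    exact tsum_congr fun w => by rw [map_smul]
  have hiκ : ∀ u, inner (𝕜 := ℝ) (τ u) κ = c u * p u := by
    intro u
    have hmt := (innerSL ℝ (τ u)).map_tsum hsum
    simp only [innerSL_apply_apply] at hmt
    rw [hκ, hmt]
    rw [tsum_eq_single u (fun w hw => by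
      simp only [inner_smul_right, hinner, if_neg (Ne.symm hw), mul_zero])]
    simp [inner_smul_right, hinner, -inner_self_eq_norm_sq_to_K]
  have hiRκ : ∀ u, inner (𝕜 := ℝ) (τ u) (R κ) = (q * r) * (c u * p u) := by
    intro u
    have hmt := (innerSL ℝ (τ u)).map_tsum hsum2
    simp only [innerSL_apply_apply] at hmt
    rw [hRκ, hmt]
    have hne' : u ≠ u * DihedralGroup.sr j := Ne.symm (hne j u)
    have hsupp : ∀ w ∉ ({u, u * DihedralGroup.sr j} : Finset (DihedralGroup 0)),
        inner (𝕜 := ℝ) (τ u) (c w • R (τ w)) = 0 := by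
      intro w hw
      simp only [Finset.mem_insert, Finset.mem_singleton, not_or] at hw
      obtain ⟨hw1, hw2⟩ := hw
      have h1 : u ≠ w := Ne.symm hw1
      have h2 : u ≠ w * DihedralGroup.sr j := by
        intro h
        have hww : u * DihedralGroup.sr j = w := by rw [h, hinv j w]
        exact hw2 hww.symm
      rw [inner_smul_right, hR w]
      split_ifs
      · rw [hinner, if_neg h2, mul_zero]
      · rw [inner_add_right, inner_smul_right, inner_smul_right, hinner, hinner,
          if_neg h1, if_neg h2]
        ring
    rw [tsum_eq_sum hsupp, Finset.sum_pair hne']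
    by_cases hasc : dihLen (u * DihedralGroup.sr j) > dihLen u
    · have hd2 : ¬ dihLen (u * DihedralGroup.sr j * DihedralGroup.sr j) >
          dihLen (u * DihedralGroup.sr j) := by
        rw [hinv j u]; omega
      rw [inner_smul_right, inner_smul_right,
        hR u, if_pos hasc, hR _, if_neg hd2, hinner, if_neg hne',
        inner_add_right, inner_smul_right, inner_smul_right, hinv j u,
        hinner, hinner, if_neg hne', if_pos rfl, hrm u hasc]
      ring
    · have hdesc := hlt u hasc
      have hasc2 : dihLen (u * DihedralGroup.sr j * DihedralGroup.sr j) >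
          dihLen (u * DihedralGroup.sr j) := by
        rw [hinv j u]; omega
      have hcu : c u = r * c (u * DihedralGroup.sr j) := by
        have := hrm _ hasc2
        rwa [hinv j u] at this
      rw [inner_smul_right, inner_smul_right,
        hR u, if_neg hasc, hR _, if_pos hasc2, hinv j u,
        inner_add_right, inner_smul_right, inner_smul_right,
        hinner, hinner, if_pos rfl, if_neg hne', hcu]
      linear_combination (-(c (u * DihedralGroup.sr j) * p u)) * hquad
  set M := (Submodule.span ℝ (Set.range τ)).topologicalClosure with hM
  have hmem : ∀ (g : DihedralGroup 0 → H) (x : H), (∀ w, g w ∈ M) → HasSum g x → x ∈ M := by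
    intro g x hg hx
    exact (Submodule.isClosed_topologicalClosure _).mem_of_tendsto hx
      (Filter.Eventually.of_forall fun s => Submodule.sum_mem _ fun w _ => hg w)
  have hτM : ∀ w, τ w ∈ M :=
    fun w => Submodule.le_topologicalClosure _ (Submodule.subset_span ⟨w, rfl⟩)
  have hκM : κ ∈ M :=
    hmem _ κ (fun w => M.smul_mem _ (hτM w)) (by rw [hκ]; exact hsum.hasSum)
  have hRκM : R κ ∈ M := by
    refine hmem _ _ ?_ (by rw [hRκ]; exact hsum2.hasSum)
    intro w
    refine M.smul_mem _ ?_
    rw [hR w]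
    split_ifs
    · exact hτM _
    · exact M.add_mem (M.smul_mem _ (hτM _)) (M.smul_mem _ (hτM _))
  set x := R κ - (q * r) • κ with hxdef
  have hx0 : ∀ u, inner (𝕜 := ℝ) (τ u) x = 0 := by
    intro u
    rw [hxdef, inner_sub_right, real_inner_smul_right, hiκ, hiRκ]
    ring
  have hxM : x ∈ M := M.sub_mem hRκM (M.smul_mem _ hκM)
  have hMle : M ≤ (Submodule.span ℝ {x})ᗮ := by
    refine Submodule.topologicalClosure_minimal _ ?_ (Submodule.isClosed_orthogonal _)
    rw [Submodule.span_le]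
    rintro v ⟨u, rfl⟩
    rw [SetLike.mem_coe, Submodule.mem_orthogonal_singleton_iff_inner_right,
      real_inner_comm]
    exact hx0 u
  have h0 : x = 0 := inner_self_eq_zero.mp
    (Submodule.mem_orthogonal_singleton_iff_inner_right.mp (hMle hxM))
  rw [hxdef] at h0
  exact sub_eq_zero.mp h0

lemma inner_tau_kappa {H : Type*} [NormedAddCommGroup H] [InnerProductSpace ℝ H]
    (qs qt rs rt : ℝ) (τ : DihedralGroup 0 → H)
    (hinner : ∀ w w' : DihedralGroup 0,
      inner (𝕜 := ℝ) (τ w) (τ w') = if w = w' then dihProd qs qt w else 0)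
    (hsum : Summable fun w => dihProd rs rt w • τ w)
    (κ : H) (hκ : κ = ∑' w, dihProd rs rt w • τ w) (u : DihedralGroup 0) :
    inner (𝕜 := ℝ) (τ u) κ = dihProd rs rt u * dihProd qs qt u := by
  have hmt := (innerSL ℝ (τ u)).map_tsum hsum
  simp only [innerSL_apply_apply] at hmt
  rw [hκ, hmt]
  rw [tsum_eq_single u (fun w hw => by
    simp only [inner_smul_right, hinner, if_neg (Ne.symm hw), mul_zero])]
  simp [inner_smul_right, hinner, -inner_self_eq_norm_sq_to_K]

/-- For κ = Σ_w r^w τ_w one of the vectors κ(1,1), κ(−1/q_s,−1/q_t),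
κ(1,−1/q_t), κ(−1/q_s,1) lying in L²_q W: κ·τ_w = q^w r^w κ for all w, hence
κ² = ‖κ‖²_q κ and κ/‖κ‖²_q is idempotent. -/
theorem kappa_idempotent (qs qt : ℝ) (hqs : 0 < qs) (hqt : 0 < qt)
    {H : Type*} [NormedAddCommGroup H] [InnerProductSpace ℝ H] [CompleteSpace H]
    (τ : DihedralGroup 0 → H)
    (hinner : ∀ w w' : DihedralGroup 0,
      inner (𝕜 := ℝ) (τ w) (τ w') = if w = w' then dihProd qs qt w else 0)
    (Rs Rt : H →L[ℝ] H)
    (hRs : ∀ w : DihedralGroup 0,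
      Rs (τ w) = if dihLen (w * DihedralGroup.sr 0) > dihLen w
        then τ (w * DihedralGroup.sr 0)
        else (qs - 1) • τ w + qs • τ (w * DihedralGroup.sr 0))
    (hRt : ∀ w : DihedralGroup 0,
      Rt (τ w) = if dihLen (w * DihedralGroup.sr 1) > dihLen w
        then τ (w * DihedralGroup.sr 1)
        else (qt - 1) • τ w + qt • τ (w * DihedralGroup.sr 1))
    (rs rt : ℝ)
    (hfour : (rs = 1 ∧ rt = 1) ∨ (rs = -1 / qs ∧ rt = -1 / qt) ∨
             (rs = 1 ∧ rt = -1 / qt) ∨ (rs = -1 / qs ∧ rt = 1))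
    (hsum : Summable fun w => dihProd rs rt w • τ w)
    (κ : H) (hκ : κ = ∑' w, dihProd rs rt w • τ w) :
    (∀ w : DihedralGroup 0,
      Rop Rs Rt w κ = (dihProd qs qt w * dihProd rs rt w) • κ) ∧
    (∑' w, dihProd rs rt w • Rop Rs Rt w κ) = ‖κ‖ ^ 2 • κ ∧
    (∑' w, (dihProd rs rt w / ‖κ‖ ^ 2) • Rop Rs Rt w ((‖κ‖ ^ 2)⁻¹ • κ))
      = (‖κ‖ ^ 2)⁻¹ • κ := by
  classical
  have hq0s : qs ≠ 0 := ne_of_gt hqs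
  have hq0t : qt ≠ 0 := ne_of_gt hqt
  have hquads : qs * (rs * rs) = (qs - 1) * rs + 1 := by
    rcases hfour with ⟨h,_⟩|⟨h,_⟩|⟨h,_⟩|⟨h,_⟩ <;> subst h <;> field_simp <;> ring
  have hquadt : qt * (rt * rt) = (qt - 1) * rt + 1 := by
    rcases hfour with ⟨_,h⟩|⟨_,h⟩|⟨_,h⟩|⟨_,h⟩ <;> subst h <;> field_simp <;> ring
  have hsEig : Rs κ = (qs * rs) • κ :=
    eig qs qt rs rt τ hinner Rs 0 qs rs hRs hlt_s (hr_s rs rt) hquads hsum κ hκ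
  have htEig : Rt κ = (qt * rt) • κ :=
    eig qs qt rs rt τ hinner Rt 1 qt rt hRt hlt_t (hr_t rs rt) hquadt hsum κ hκ
  have hclaim1 : ∀ w, Rop Rs Rt w κ = (dihProd qs qt w * dihProd rs rt w) • κ := by
    intro w
    have h1 := Rop_eigen Rs Rt κ (qs * rs) (qt * rt) hsEig htEig (dihWord w)
    have h2 : evP (qs * rs) (qt * rt) (dihWord w)
        = dihProd qs qt w * dihProd rs rt w := by
      rw [← dihProd_eq_evP, ← dihProd_mul]
    rw [Rop, h1, h2]
  have hnormτ : ∀ w, ‖τ w‖ ^ 2 = dihProd qs qt w := by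
    intro w
    rw [← real_inner_self_eq_norm_sq, hinner, if_pos rfl]
  have hτ0 : ∀ w, ‖τ w‖ ≠ 0 := by
    intro w h
    have h2 := hnormτ w
    rw [h] at h2
    have hpos := dihProd_pos hqs hqt w
    rw [← h2] at hpos
    simp at hpos
  have hv : Orthonormal ℝ (fun w => ‖τ w‖⁻¹ • τ w) := by
    rw [orthonormal_iff_ite]
    intro i j
    rw [real_inner_smul_left, real_inner_smul_right, hinner]
    split_ifs with h
    · subst h
      rw [← hnormτ i]
      field_simp
      rw [div_self (hτ0 i)]
    · ring
  have hsumSq : Summable (fun w => dihProd rs rt w * (dihProd rs rt w * dihProd qs qt w)) := by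
    have hOF := hv.orthogonalFamily
    have hs2 := (hOF.summable_iff_norm_sq_summable
      (fun w => dihProd rs rt w * ‖τ w‖)).mp ?_
    · refine hs2.congr fun w => ?_
      rw [Real.norm_eq_abs, sq_abs, mul_pow, hnormτ w]
      ring
    · refine hsum.congr fun w => ?_
      rw [LinearIsometry.toSpanSingleton_apply, smul_smul, mul_assoc,
        mul_inv_cancel₀ (hτ0 w), mul_one]
  have hnormκ : ‖κ‖ ^ 2 = ∑' w, dihProd rs rt w * (dihProd rs rt w * dihProd qs qt w) := by
    rw [← real_inner_self_eq_norm_sq]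
    have hmt := (innerSL ℝ κ).map_tsum hsum
    simp only [innerSL_apply_apply] at hmt
    rw [← hκ] at hmt
    rw [hmt]
    refine tsum_congr fun w => ?_
    rw [real_inner_smul_right, real_inner_comm,
      inner_tau_kappa qs qt rs rt τ hinner hsum κ hκ w]
  refine ⟨hclaim1, ?_, ?_⟩
  · have he : ∀ w, dihProd rs rt w • Rop Rs Rt w κ
        = (dihProd rs rt w * (dihProd rs rt w * dihProd qs qt w)) • κ := by
      intro w
      rw [hclaim1 w, smul_smul]
      congr 1
      ring
    rw [tsum_congr he, hsumSq.tsum_smul_const, ← hnormκ]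
  · have he : ∀ w, (dihProd rs rt w / ‖κ‖ ^ 2) • Rop Rs Rt w ((‖κ‖ ^ 2)⁻¹ • κ)
        = ((‖κ‖ ^ 2)⁻¹ * (‖κ‖ ^ 2)⁻¹
            * (dihProd rs rt w * (dihProd rs rt w * dihProd qs qt w))) • κ := by
      intro w
      rw [map_smul, hclaim1 w, smul_smul, smul_smul]
      congr 1
      rw [div_eq_mul_inv]
      ring
    rw [tsum_congr he, (hsumSq.mul_left _).tsum_smul_const, tsum_mul_left, ← hnormκ]
    congr 1
    rcases eq_or_ne (‖κ‖ ^ 2) 0 with h | h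
    · rw [h]; simp
    · field_simp
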